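/- Let Y be a nonempty finite type, let π_ref be a probability mass function on Y with full support, let f : Y → ℝ be a reward-quality function, let γ > 0, β > 0, and let R_max and R₀ be real numbers with R₀ < R_max. Define the reward r(y) = −γ·(f(y) − R_max)², the objective J(π) = Σ_y π(y)·r(y) − β·Σ_y π(y)·log(π(y)/π_ref(y)), and the two Gibbs policies π_good(y) = π_ref(y)·exp(−γ·(f(y) − R_max)²/β)/Z_good and π_bad(y) = π_ref(y)·exp(−γ·(f(y) − R₀)²/β)/Z_bad, where Z_good and Z_bad are the corresponding normalizing constants. If π_good ≠ π_bad, then J(π_good) > J(π_bad); that is, there is a strict quality gap between the good policy and the bad policy. -/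

import Mathlib

/-- Pointwise Gibbs inequality: `p - q ≤ p * log (p/q)` with strict inequality when `p ≠ q`. -/
lemma gibbs_pointwise {p q : ℝ} (hp : 0 < p) (hq : 0 < q) :
    p - q ≤ p * Real.log (p / q) ∧ (p ≠ q → p - q < p * Real.log (p / q)) := by
  have hqp : 0 < q / p := div_pos hq hp
  constructor
  · have h := Real.log_le_sub_one_of_pos hqp
    have hlog : Real.log (p / q) = - Real.log (q / p) := by
      rw [← Real.log_inv, inv_div]
    rw [hlog]
    have : p * (-(q / p - 1)) ≤ p * (- Real.log (q / p)) := by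
      apply mul_le_mul_of_nonneg_left (by linarith) hp.le
    calc p - q = p * (-(q / p - 1)) := by field_simp; ring
      _ ≤ p * (- Real.log (q / p)) := this
  · intro hne
    have hne1 : q / p ≠ 1 := by
      intro h
      exact hne ((div_eq_one_iff_eq hp.ne').mp h).symm
    have h := Real.log_lt_sub_one_of_pos hqp hne1
    have hlog : Real.log (p / q) = - Real.log (q / p) := by
      rw [← Real.log_inv, inv_div]
    rw [hlog]
    have : p * (-(q / p - 1)) < p * (- Real.log (q / p)) := by
      apply mul_lt_mul_of_pos_left (by linarith) hp
    calc p - q = p * (-(q / p - 1)) := by field_simp; ring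
      _ < p * (- Real.log (q / p)) := this

/-- Strict-inequality conclusion (Equation 11) of Proposition 1 (Quality gap between
responses): with reward `r(y) = −γ·(f(y) − R_max)²` and objective
`J(π) = Σ_y π(y)·r(y) − β·Σ_y π(y)·log(π(y)/π_ref(y))`, if the Gibbs policies
`π_good` (conditioned on `R_max`) and `π_bad` (conditioned on `R₀ < R_max`) differ,
then `J(π_good) > J(π_bad)`. -/
theorem quality_gap_strict
    {Y : Type*} [Fintype Y] [Nonempty Y]
    (πref : Y → ℝ) (href_pos : ∀ y, 0 < πref y) (href_sum : ∑ y, πref y = 1)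
    (f : Y → ℝ) (γ β Rmax R₀ : ℝ) (hγ : 0 < γ) (hβ : 0 < β) (hR : R₀ < Rmax)
    (r : Y → ℝ) (hr : ∀ y, r y = -γ * (f y - Rmax) ^ 2)
    (J : (Y → ℝ) → ℝ)
    (hJ : ∀ π : Y → ℝ,
      J π = ∑ y, π y * r y - β * ∑ y, π y * Real.log (π y / πref y))
    (Zgood : ℝ) (hZgood : Zgood = ∑ y, πref y * Real.exp (-γ * (f y - Rmax) ^ 2 / β))
    (Zbad : ℝ) (hZbad : Zbad = ∑ y, πref y * Real.exp (-γ * (f y - R₀) ^ 2 / β))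
    (πgood : Y → ℝ)
    (hgood : ∀ y, πgood y = πref y * Real.exp (-γ * (f y - Rmax) ^ 2 / β) / Zgood)
    (πbad : Y → ℝ)
    (hbad : ∀ y, πbad y = πref y * Real.exp (-γ * (f y - R₀) ^ 2 / β) / Zbad)
    (hne : πgood ≠ πbad) :
    J πgood > J πbad := by
  have hZg : 0 < Zgood := by
    rw [hZgood]
    exact Finset.sum_pos (fun y _ => mul_pos (href_pos y) (Real.exp_pos _))
      Finset.univ_nonempty
  have hZb : 0 < Zbad := by
    rw [hZbad]
    exact Finset.sum_pos (fun y _ => mul_pos (href_pos y) (Real.exp_pos _))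
      Finset.univ_nonempty
  have hgpos : ∀ y, 0 < πgood y := fun y => by
    rw [hgood]; exact div_pos (mul_pos (href_pos y) (Real.exp_pos _)) hZg
  have hbpos : ∀ y, 0 < πbad y := fun y => by
    rw [hbad]; exact div_pos (mul_pos (href_pos y) (Real.exp_pos _)) hZb
  have hgsum : ∑ y, πgood y = 1 := by
    have h : ∑ y, πgood y = (∑ y, πref y * Real.exp (-γ * (f y - Rmax) ^ 2 / β)) / Zgood := by
      rw [Finset.sum_div]; exact Finset.sum_congr rfl fun y _ => hgood y
    rw [h, ← hZgood, div_self hZg.ne']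
  have hbsum : ∑ y, πbad y = 1 := by
    have h : ∑ y, πbad y = (∑ y, πref y * Real.exp (-γ * (f y - R₀) ^ 2 / β)) / Zbad := by
      rw [Finset.sum_div]; exact Finset.sum_congr rfl fun y _ => hbad y
    rw [h, ← hZbad, div_self hZb.ne']
  -- log of πgood
  have hlogg : ∀ y, Real.log (πgood y) =
      Real.log (πref y) + r y / β - Real.log Zgood := by
    intro y
    rw [hgood, Real.log_div (mul_pos (href_pos y) (Real.exp_pos _)).ne' hZg.ne',
      Real.log_mul (href_pos y).ne' (Real.exp_pos _).ne', Real.log_exp, hr]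
  -- Key identity: J π = β log Zgood − β KL(π ‖ πgood)
  have key : ∀ π : Y → ℝ, (∀ y, 0 < π y) → ∑ y, π y = 1 →
      J π = β * Real.log Zgood - β * ∑ y, π y * Real.log (π y / πgood y) := by
    intro π hπ hπs
    rw [hJ]
    have hpt : ∀ y, π y * Real.log (π y / πgood y) =
        π y * Real.log (π y / πref y) - π y * (r y / β) + π y * Real.log Zgood := by
      intro y
      rw [Real.log_div (hπ y).ne' (hgpos y).ne',
        Real.log_div (hπ y).ne' (href_pos y).ne', hlogg y]
      ring
    rw [Finset.sum_congr rfl (fun y _ => hpt y)]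
    rw [Finset.sum_add_distrib, Finset.sum_sub_distrib, ← Finset.sum_mul, hπs]
    have : ∑ y, π y * (r y / β) = (∑ y, π y * r y) / β := by
      rw [Finset.sum_div]
      exact Finset.sum_congr rfl fun y _ => by ring
    rw [this]
    field_simp
    ring
  have hJg : J πgood = β * Real.log Zgood := by
    rw [key πgood hgpos hgsum]
    have : ∀ y, πgood y * Real.log (πgood y / πgood y) = 0 := by
      intro y
      rw [div_self (hgpos y).ne', Real.log_one, mul_zero]
    rw [Finset.sum_congr rfl (fun y _ => this y)]
    simp
  have hJb := key πbad hbpos hbsum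
  -- KL(πbad ‖ πgood) > 0
  have hKL : 0 < ∑ y, πbad y * Real.log (πbad y / πgood y) := by
    obtain ⟨y₀, hy₀⟩ : ∃ y, πbad y ≠ πgood y := by
      by_contra h
      push_neg at h
      exact hne (funext fun y => (h y).symm)
    have hsum0 : ∑ y, (πbad y - πgood y) = 0 := by
      rw [Finset.sum_sub_distrib, hbsum, hgsum]; ring
    have hlt : ∑ y, (πbad y - πgood y) < ∑ y, πbad y * Real.log (πbad y / πgood y) := by
      apply Finset.sum_lt_sum
      · intro y _
        exact (gibbs_pointwise (hbpos y) (hgpos y)).1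
      · exact ⟨y₀, Finset.mem_univ y₀, (gibbs_pointwise (hbpos y₀) (hgpos y₀)).2 hy₀⟩
    linarith
  rw [hJg, hJb]
  nlinarith
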